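/- Let r ≥ 2 and let H be an r-graph on an n-element vertex set V. Suppose that for all disjoint sets X, Y ⊆ V such that X is nonempty and independent and |Y| < (r−1)|X|, there is an edge of H meeting X and disjoint from Y. Then H has a perfect fractional matching. -/

import Mathlib

open Finset RealInnerProductSpace

namespace Stmt0Aux

variable {ι : Type*} [DecidableEq ι] {E : Type*} [NormedAddCommGroup E]
  [InnerProductSpace ℝ E] [FiniteDimensional ℝ E]

/-- The cone of nonnegative combinations of `g e`, `e ∈ s`. -/
def coneOf (g : ι → E) (s : Finset ι) : Set E :=
  {x | ∃ φ : ι → ℝ, (∀ e, 0 ≤ φ e) ∧ x = ∑ e ∈ s, φ e • g e}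

lemma coneOf_mono {g : ι → E} {T s : Finset ι} (hTs : T ⊆ s) :
    coneOf g T ⊆ coneOf g s := by
  rintro x ⟨φ, hφ, rfl⟩
  refine ⟨fun e => if e ∈ T then φ e else 0, fun e => by dsimp only; split <;> simp [hφ e], ?_⟩
  rw [← Finset.sum_subset hTs (fun e _ he => by simp [he])]
  exact Finset.sum_congr rfl fun e he => by simp [he]

lemma carath (g : ι → E) : ∀ s : Finset ι, ∀ x ∈ coneOf g s,
    ∃ T, T ⊆ s ∧ LinearIndependent ℝ (fun e : T => g e) ∧ x ∈ coneOf g T := by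
  intro s
  induction s using Finset.strongInductionOn with
  | _ s ih =>
  intro x hx
  by_cases hli : LinearIndependent ℝ (fun e : s => g e)
  · exact ⟨s, subset_rfl, hli, hx⟩
  obtain ⟨φ, hφ0, rfl⟩ := hx
  obtain ⟨d, hd0, i, hdi⟩ := Fintype.not_linearIndependent_iff.mp hli
  have key : ∀ dd : ι → ℝ, (∑ e ∈ s, dd e • g e = 0) → (∃ e ∈ s, 0 < dd e) →
      ∃ T, T ⊆ s ∧ LinearIndependent ℝ (fun e : T => g e) ∧
        (∑ e ∈ s, φ e • g e) ∈ coneOf g T := by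
    intro dd hddsum ⟨e₁, he₁s, he₁pos⟩
    have hPne : (s.filter fun e => 0 < dd e).Nonempty := ⟨e₁, by simp [he₁s, he₁pos]⟩
    obtain ⟨e₀, he₀P, hmin⟩ :=
      (s.filter fun e => 0 < dd e).exists_min_image (fun e => φ e / dd e) hPne
    rw [Finset.mem_filter] at he₀P
    obtain ⟨he₀s, he₀pos⟩ := he₀P
    set t := φ e₀ / dd e₀ with ht
    have ht0 : 0 ≤ t := div_nonneg (hφ0 _) he₀pos.le
    have hx' : (∑ e ∈ s, φ e • g e) ∈ coneOf g (s.erase e₀) := by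
      refine ⟨fun e => if e ∈ s.erase e₀ then φ e - t * dd e else 0, ?_, ?_⟩
      · intro e
        by_cases he : e ∈ s.erase e₀
        · simp only [he, if_true]
          rcases le_or_gt (dd e) 0 with h | h
          · nlinarith [hφ0 e]
          · have := hmin e (Finset.mem_filter.mpr ⟨Finset.mem_of_mem_erase he, h⟩)
            rw [le_div_iff₀ h] at this
            linarith
        · simp [he]
      · have h1 : ∑ e ∈ s.erase e₀,
            (if e ∈ s.erase e₀ then φ e - t * dd e else 0) • g e
            = ∑ e ∈ s.erase e₀, (φ e - t * dd e) • g e :=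
          Finset.sum_congr rfl fun e he => by rw [if_pos he]
        have h2 : ∑ e ∈ s.erase e₀, (φ e - t * dd e) • g e
            = ∑ e ∈ s, (φ e - t * dd e) • g e := by
          apply Finset.sum_subset (Finset.erase_subset _ _)
          intro e hes hene
          have : e = e₀ := by
            by_contra hne
            exact hene (Finset.mem_erase.mpr ⟨hne, hes⟩)
          subst this
          rw [ht, div_mul_cancel₀ _ (ne_of_gt he₀pos)]
          simp
        rw [h1, h2]
        have : ∑ e ∈ s, (φ e - t * dd e) • g e
            = (∑ e ∈ s, φ e • g e) - t • (∑ e ∈ s, dd e • g e) := by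
          rw [Finset.smul_sum, ← Finset.sum_sub_distrib]
          refine Finset.sum_congr rfl fun e _ => ?_
          rw [sub_smul, smul_smul]
        rw [this, hddsum, smul_zero, sub_zero]
    obtain ⟨T, hT1, hT2, hT3⟩ := ih (s.erase e₀) (Finset.erase_ssubset he₀s) _ hx'
    exact ⟨T, hT1.trans (Finset.erase_subset _ _), hT2, hT3⟩
  -- extend d to ι
  set dd : ι → ℝ := fun e => if h : e ∈ s then d ⟨e, h⟩ else 0 with hdd
  have hddsum : ∑ e ∈ s, dd e • g e = 0 := by
    rw [← Finset.sum_attach s (fun e => dd e • g e)]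
    rw [← hd0]
    exact Finset.sum_congr rfl fun e _ => by simp [hdd, e.2]
  rcases lt_or_gt_of_ne hdi with h | h
  · have hsum' : ∑ e ∈ s, (-dd) e • g e = 0 := by
      simp only [Pi.neg_apply, neg_smul, Finset.sum_neg_distrib, hddsum, neg_zero]
    exact key (-dd) hsum' ⟨i, i.2, by simp [hdd, i.2]; linarith⟩
  · exact key dd hddsum ⟨i, i.2, by simp [hdd, i.2]; exact h⟩


lemma coneOf_isClosed_of_li (g : ι → E) (s : Finset ι)
    (hli : LinearIndependent ℝ (fun e : s => g e)) : IsClosed (coneOf g s) := by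
  let L : (s → ℝ) →ₗ[ℝ] E :=
    { toFun := fun ψ => ∑ e : s, ψ e • g e
      map_add' := by intro a b; simp [add_smul, Finset.sum_add_distrib]
      map_smul' := by intro c a; simp [smul_smul, Finset.smul_sum] }
  have hker : LinearMap.ker L = ⊥ := by
    rw [LinearMap.ker_eq_bot']
    intro ψ hψ
    exact funext (Fintype.linearIndependent_iff.mp hli ψ hψ)
  have hemb := L.isClosedEmbedding_of_injective hker
  have himg : coneOf g s = L '' {ψ | ∀ e, 0 ≤ ψ e} := by
    ext x
    constructor
    · rintro ⟨φ, hφ, rfl⟩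
      refine ⟨fun e => φ e, fun e => hφ e, ?_⟩
      exact Finset.sum_attach s fun e => φ e • g e
    · rintro ⟨ψ, hψ, rfl⟩
      refine ⟨fun e => if h : e ∈ s then ψ ⟨e, h⟩ else 0, ?_, ?_⟩
      · intro e; dsimp only; split
        · exact hψ _
        · exact le_rfl
      · show L ψ = _
        rw [← Finset.sum_attach s]
        exact Finset.sum_congr rfl fun e _ => by simp [e.2]
  rw [himg]
  refine hemb.isClosedMap _ ?_
  have : {ψ : s → ℝ | ∀ e, 0 ≤ ψ e} = ⋂ e, (fun ψ : s → ℝ => ψ e) ⁻¹' Set.Ici 0 := by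
    ext ψ; simp [Set.mem_iInter]
  rw [this]
  exact isClosed_iInter fun e => isClosed_Ici.preimage (continuous_apply e)

lemma coneOf_isClosed (g : ι → E) (s : Finset ι) : IsClosed (coneOf g s) := by
  have hu : coneOf g s =
      ⋃ T ∈ {T : Finset ι | T ⊆ s ∧ LinearIndependent ℝ (fun e : T => g e)}, coneOf g T := by
    ext x
    simp only [Set.mem_iUnion, Set.mem_setOf_eq]
    constructor
    · intro hx
      obtain ⟨T, h1, h2, h3⟩ := carath g s x hx
      exact ⟨T, ⟨h1, h2⟩, h3⟩
    · rintro ⟨T, ⟨h1, _⟩, h3⟩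
      exact coneOf_mono h1 h3
  rw [hu]
  refine Set.Finite.isClosed_biUnion ?_ ?_
  · exact Set.Finite.subset (s.powerset : Finset (Finset ι)).finite_toSet
      (fun T hT => by simpa [Finset.mem_powerset] using hT.1)
  · rintro T ⟨_, h2⟩
    exact coneOf_isClosed_of_li g T h2

lemma farkas [CompleteSpace E] (g : ι → E) (s : Finset ι) (b : E)
    (h : ∀ y : E, (∀ e ∈ s, 0 ≤ ⟪g e, y⟫) → 0 ≤ ⟪y, b⟫) :
    b ∈ coneOf g s := by
  by_contra hb
  let K : ConvexCone ℝ E :=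
    { carrier := coneOf g s
      smul_mem' := by
        rintro c hc x ⟨φ, hφ, rfl⟩
        refine ⟨fun e => c * φ e, fun e => mul_nonneg hc.le (hφ e), ?_⟩
        rw [Finset.smul_sum]
        exact Finset.sum_congr rfl fun e _ => by rw [smul_smul]
      add_mem' := by
        rintro x ⟨φ, hφ, rfl⟩ y ⟨ψ, hψ, rfl⟩
        refine ⟨fun e => φ e + ψ e, fun e => add_nonneg (hφ e) (hψ e), ?_⟩
        rw [← Finset.sum_add_distrib]
        exact Finset.sum_congr rfl fun e _ => by rw [add_smul] }
  have hne : (K : Set E).Nonempty := ⟨0, fun _ => (0:ℝ), fun e => le_rfl, by simp⟩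
  obtain ⟨y, hy1, hy2⟩ : ∃ y : E, (∀ x ∈ coneOf g s, 0 ≤ ⟪x, y⟫) ∧ ⟪y, b⟫ < 0 := by
    let C : ProperCone ℝ E :=
      { carrier := coneOf g s
        add_mem' := fun hx hy => K.add_mem' hx hy
        zero_mem' := ⟨fun _ => (0:ℝ), fun _ => le_rfl, by simp⟩
        smul_mem' := by
          rintro c x ⟨φ, hφ, rfl⟩
          refine ⟨fun e => (c:ℝ) * φ e, fun e => mul_nonneg c.2 (hφ e), ?_⟩
          show (c:ℝ) • (∑ e ∈ s, φ e • g e) = _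
          rw [Finset.smul_sum]
          exact Finset.sum_congr rfl fun e _ => by rw [smul_smul]
        isClosed' := coneOf_isClosed g s }
    obtain ⟨y, hy1, hy2⟩ := ProperCone.hyperplane_separation' (x₀ := b) C (by exact hb)
    exact ⟨y, fun x hx => hy1 x (by exact hx), by rwa [real_inner_comm]⟩
  have : ∀ e ∈ s, 0 ≤ ⟪g e, y⟫ := by
    intro e he
    refine hy1 (g e) ⟨fun e' => if e' = e then 1 else 0, ?_, ?_⟩
    · intro e'; dsimp only; split
      · exact zero_le_one
      · exact le_rfl
    · have : ∀ e' ∈ s, (fun e' => if e' = e then (1:ℝ) else 0) e' • g e'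
          = if e' = e then g e' else 0 := by
        intro e' _; dsimp only; split <;> simp
      rw [Finset.sum_congr rfl this, Finset.sum_ite_eq' s e, if_pos he]
  linarith [h y this]


variable {V : Type*} [Fintype V] [DecidableEq V]

/-- Indicator vector of a finite set, as an element of Euclidean space. -/
noncomputable def ind (e : Finset V) : EuclideanSpace ℝ V :=
  (WithLp.equiv 2 (V → ℝ)).symm (fun v => if v ∈ e then (1:ℝ) else 0)

lemma inner_ind (e : Finset V) (y : EuclideanSpace ℝ V) :
    ⟪ind e, y⟫ = ∑ v ∈ e, y v := by
  rw [PiLp.inner_apply]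
  simp [ind, RCLike.inner_apply, ite_mul, Finset.sum_ite_mem]

end Stmt0Aux

open Stmt0Aux

/-- If `H` is an `r`-graph on a finite vertex set `V` such that for all
disjoint `X, Y ⊆ V` with `X` nonempty and independent and `|Y| < (r-1)|X|` there is an
edge meeting `X` and disjoint from `Y`, then `H` has a perfect fractional matching. -/
theorem stmt0 {V : Type*} [Fintype V] [DecidableEq V] (r : ℕ) (hr : 2 ≤ r)
    (H : Finset (Finset V)) (hunif : ∀ e ∈ H, e.card = r)
    (hexp : ∀ X Y : Finset V, Disjoint X Y → X.Nonempty →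
      (∀ e ∈ H, ¬ e ⊆ X) → Y.card < (r - 1) * X.card →
      ∃ e ∈ H, (e ∩ X).Nonempty ∧ Disjoint e Y) :
    ∃ φ : Finset V → ℝ, (∀ e ∈ H, 0 ≤ φ e ∧ φ e ≤ 1) ∧
      (∀ v : V, ∑ e ∈ H with v ∈ e, φ e ≤ 1) ∧
      ∑ e ∈ H, φ e = (Fintype.card V : ℝ) / r := by
  classical
  have hr0 : (0:ℝ) < r := by positivity
  have hr1 : (0:ℝ) < (r:ℝ) - 1 := by
    have : (2:ℝ) ≤ r := by exact_mod_cast hr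
    linarith
  have hbK : ind (univ : Finset V) ∈ coneOf (ind (V := V)) H := by
    apply farkas
    intro y hy
    have hedge : ∀ e ∈ H, 0 ≤ ∑ v ∈ e, y v := by
      intro e he
      have := hy e he
      rwa [inner_ind] at this
    rw [real_inner_comm, inner_ind]
    -- show 0 ≤ ∑ v, y v
    by_contra htot
    push_neg at htot
    -- the combinatorial heart
    set A : Finset V := univ.filter (fun v => y v < 0) with hA
    have hAne : A.Nonempty := by
      rw [hA, Finset.filter_nonempty_iff]
      by_contra h
      push_neg at h
      have : 0 ≤ ∑ v ∈ univ, y v := Finset.sum_nonneg fun v _ => h v (mem_univ v)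
      linarith
    have claim : ∀ t : ℝ, 0 < t → (univ.filter fun v => y v ≤ -t).Nonempty →
        (r - 1) * (univ.filter fun v => y v ≤ -t).card
          ≤ (univ.filter fun w => t ≤ ((r:ℝ) - 1) * y w).card := by
      intro t ht hXne
      set X := univ.filter fun v => y v ≤ -t with hX
      set Y := univ.filter fun w => t ≤ ((r:ℝ) - 1) * y w with hY
      by_contra hlt
      push_neg at hlt
      have hdisj : Disjoint X Y := by
        rw [Finset.disjoint_left]
        intro v hvX hvY
        rw [hX, Finset.mem_filter] at hvX
        rw [hY, Finset.mem_filter] at hvY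
        have hv0 : y v < 0 := by linarith [hvX.2]
        have : ((r:ℝ) - 1) * y v < 0 := mul_neg_of_pos_of_neg hr1 hv0
        linarith [hvY.2]
      have hind : ∀ e ∈ H, ¬ e ⊆ X := by
        intro e he hsub
        have h1 : ∑ v ∈ e, y v ≤ ∑ _v ∈ e, (-t) :=
          Finset.sum_le_sum fun v hv => (Finset.mem_filter.mp (hsub hv)).2
        rw [Finset.sum_const, hunif e he, nsmul_eq_mul] at h1
        have h2 := hedge e he
        nlinarith
      obtain ⟨e, he, ⟨u, hu⟩, hdisjY⟩ := hexp X Y hdisj hXne hind hlt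
      rw [Finset.mem_inter] at hu
      have hu1 : y u ≤ -t := (Finset.mem_filter.mp hu.2).2
      have herase : (e.erase u).card = r - 1 := by
        rw [Finset.card_erase_of_mem hu.1, hunif e he]
      have heraseNe : (e.erase u).Nonempty := by
        rw [← Finset.card_pos, herase]; omega
      have hlt2 : ∑ v ∈ e.erase u, y v < ∑ _v ∈ e.erase u, t / ((r:ℝ) - 1) := by
        refine Finset.sum_lt_sum_of_nonempty heraseNe fun v hv => ?_
        have hvY : v ∉ Y := Finset.disjoint_left.mp hdisjY (Finset.mem_of_mem_erase hv)
        rw [hY, Finset.mem_filter, not_and] at hvY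
        have h3 := hvY (mem_univ v)
        rw [not_le] at h3
        rw [lt_div_iff₀ hr1]
        linarith
      rw [Finset.sum_const, herase, nsmul_eq_mul] at hlt2
      have hcast : ((r - 1 : ℕ) : ℝ) = (r:ℝ) - 1 := by
        rw [Nat.cast_sub (by omega)]; simp
      rw [hcast, mul_div_cancel₀ _ (ne_of_gt hr1)] at hlt2
      have hsplit : ∑ v ∈ e, y v = y u + ∑ v ∈ e.erase u, y v :=
        (Finset.add_sum_erase e y hu.1).symm
      have h4 := hedge e he
      linarith
    -- Hall's theorem setup
    let t' : (↥A × Fin (r - 1)) → Finset V :=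
      fun p => univ.filter fun w => -y ↑p.1 ≤ ((r:ℝ) - 1) * y w
    have hApos : ∀ a : ↥A, 0 < -y ↑a := by
      intro a
      have h2 := Finset.mem_filter.mp a.2
      linarith [h2.2]
    have hall : ∀ S : Finset (↥A × Fin (r - 1)), S.card ≤ (S.biUnion t').card := by
      intro S
      rcases S.eq_empty_or_nonempty with rfl | hSne
      · simp
      obtain ⟨p₀, hp₀S, hp₀max⟩ := S.exists_max_image (fun p => y ↑p.1) hSne
      have ht₀ : 0 < -y ↑p₀.1 := hApos p₀.1
      have h1 : S ⊆ (S.image Prod.fst) ×ˢ (univ : Finset (Fin (r-1))) := by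
        intro p hp
        rw [Finset.mem_product]
        exact ⟨Finset.mem_image_of_mem _ hp, mem_univ _⟩
      have h2 : S.card ≤ (S.image Prod.fst).card * (r - 1) := by
        calc S.card ≤ ((S.image Prod.fst) ×ˢ (univ : Finset (Fin (r-1)))).card :=
              Finset.card_le_card h1
          _ = (S.image Prod.fst).card * (r - 1) := by
              rw [Finset.card_product, Finset.card_univ, Fintype.card_fin]
      have h3 : (S.image Prod.fst).card
          ≤ (univ.filter fun v => y v ≤ -(-y ↑p₀.1)).card := by
        apply Finset.card_le_card_of_injOn (fun a => ↑a)
        · intro a ha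
          rw [Finset.mem_coe, Finset.mem_image] at ha
          obtain ⟨p, hpS, rfl⟩ := ha
          rw [Finset.mem_coe, Finset.mem_filter]
          exact ⟨mem_univ _, by linarith [hp₀max p hpS]⟩
        · intro a _ b _ hab
          exact Subtype.coe_injective hab
      have hXne : (univ.filter fun v => y v ≤ -(-y ↑p₀.1)).Nonempty :=
        ⟨↑p₀.1, by rw [Finset.mem_filter]; exact ⟨mem_univ _, by linarith⟩⟩
      have h4 := claim (-y ↑p₀.1) ht₀ hXne
      have h5 : (univ.filter fun w => -y ↑p₀.1 ≤ ((r:ℝ) - 1) * y w) ⊆ S.biUnion t' := by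
        intro w hw
        rw [Finset.mem_biUnion]
        exact ⟨p₀, hp₀S, hw⟩
      calc S.card ≤ (S.image Prod.fst).card * (r - 1) := h2
        _ ≤ (univ.filter fun v => y v ≤ -(-y ↑p₀.1)).card * (r-1) :=
            Nat.mul_le_mul_right _ h3
        _ = (r-1) * (univ.filter fun v => y v ≤ -(-y ↑p₀.1)).card := Nat.mul_comm _ _
        _ ≤ (univ.filter fun w => -y ↑p₀.1 ≤ ((r:ℝ) - 1) * y w).card := h4
        _ ≤ (S.biUnion t').card := Finset.card_le_card h5
    obtain ⟨f, hfinj, hf⟩ := (Finset.all_card_le_biUnion_card_iff_exists_injective t').mp hall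
    have hfmem : ∀ p : ↥A × Fin (r-1), -y ↑p.1 ≤ ((r:ℝ) - 1) * y (f p) := by
      intro p
      have := hf p
      rw [Finset.mem_filter] at this
      exact this.2
    have hfpos : ∀ p, 0 < y (f p) := by
      intro p
      nlinarith [hfmem p, hApos p.1, hr1]
    set B := univ.filter (fun v => 0 < y v) with hB
    have himg : ∑ p : ↥A × Fin (r-1), y (f p) ≤ ∑ w ∈ B, y w := by
      have himgeq : ∑ w ∈ Finset.image f univ, y w = ∑ p ∈ univ, y (f p) :=
        Finset.sum_image (fun x _ x' _ h => hfinj h)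
      rw [← himgeq]
      apply Finset.sum_le_sum_of_subset_of_nonneg
      · intro w hw
        rw [Finset.mem_image] at hw
        obtain ⟨p, _, rfl⟩ := hw
        rw [hB, Finset.mem_filter]
        exact ⟨mem_univ _, hfpos p⟩
      · intro w hw _
        rw [hB, Finset.mem_filter] at hw
        linarith [hw.2]
    have hlb : ∑ v ∈ A, (-y v) ≤ ∑ p : ↥A × Fin (r-1), y (f p) := by
      have e1 : ∑ p : ↥A × Fin (r-1), (-y ↑p.1) / ((r:ℝ)-1) ≤ ∑ p, y (f p) :=
        Finset.sum_le_sum fun p _ => by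
          rw [div_le_iff₀ hr1]
          have := hfmem p
          linarith [this]
      have e2 : ∑ p : ↥A × Fin (r-1), (-y ↑p.1) / ((r:ℝ)-1) = ∑ v ∈ A, (-y v) := by
        rw [Fintype.sum_prod_type]
        have hconst : ∀ a : ↥A, ∑ _i : Fin (r-1), (-y ↑a) / ((r:ℝ)-1) = -y ↑a := by
          intro a
          rw [Finset.sum_const, Finset.card_univ, Fintype.card_fin, nsmul_eq_mul,
            Nat.cast_sub (by omega : 1 ≤ r), Nat.cast_one, mul_div_cancel₀]
          exact ne_of_gt hr1
        rw [Finset.sum_congr rfl (fun a _ => hconst a)]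
        exact Finset.sum_coe_sort A (fun v => -y v)
      linarith
    have hsplit : ∑ v ∈ univ, y v
        = ∑ v ∈ univ.filter (fun v => 0 < y v), y v
          + ∑ v ∈ univ.filter (fun v => ¬ 0 < y v), y v :=
      (Finset.sum_filter_add_sum_filter_not univ _ y).symm
    have hArest : ∑ v ∈ univ.filter (fun v => ¬ 0 < y v), y v = ∑ v ∈ A, y v := by
      refine (Finset.sum_subset ?_ ?_).symm
      · intro v hv
        rw [hA, Finset.mem_filter] at hv
        rw [Finset.mem_filter]
        exact ⟨mem_univ _, by linarith [hv.2]⟩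
      · intro v hv hvA
        rw [Finset.mem_filter, not_lt] at hv
        rw [hA, Finset.mem_filter, not_and, not_lt] at hvA
        have := hvA (mem_univ v)
        linarith [hv.2]
    have hBsum : ∑ v ∈ A, (-y v) ≤ ∑ w ∈ B, y w := le_trans hlb himg
    have hAsum : ∑ v ∈ A, (-y v) = - ∑ v ∈ A, y v := by
      rw [Finset.sum_neg_distrib]
    rw [hsplit, ← hB, hArest] at htot
    rw [hAsum] at hBsum
    linarith
  obtain ⟨φ, hφ0, hφsum⟩ := hbK
  have hvert : ∀ v : V, ∑ e ∈ H with v ∈ e, φ e = 1 := by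
    intro v
    have h1 : ⟪EuclideanSpace.single v (1:ℝ), ind (univ : Finset V)⟫ = 1 := by
      rw [EuclideanSpace.inner_single_left]
      simp [ind]
    rw [hφsum, inner_sum] at h1
    simp only [real_inner_smul_right, EuclideanSpace.inner_single_left, conj_trivial,
      one_mul, PiLp.smul_apply, smul_eq_mul] at h1
    have h2 : ∀ e ∈ H, φ e * (ind e) v = if v ∈ e then φ e else 0 := by
      intro e _
      show φ e * (if v ∈ e then (1:ℝ) else 0) = _
      split <;> ring
    rw [Finset.sum_congr rfl h2, ← Finset.sum_filter] at h1
    exact h1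
  set Φ : Finset V → ℝ := fun e => if e ∈ H then φ e else 0 with hΦ
  have hΦvert : ∀ v : V, ∑ e ∈ H with v ∈ e, Φ e = 1 := by
    intro v
    rw [← hvert v]
    refine Finset.sum_congr rfl fun e he => ?_
    rw [Finset.mem_filter] at he
    simp [hΦ, he.1]
  refine ⟨Φ, ?_, ?_, ?_⟩
  · intro e he
    have hpos : 0 ≤ Φ e := by simp [hΦ, he, hφ0 e]
    refine ⟨hpos, ?_⟩
    have hcard : e.card = r := hunif e he
    have hene : e.Nonempty := Finset.card_pos.mp (by omega)
    obtain ⟨v, hv⟩ := hene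
    calc Φ e ≤ ∑ e' ∈ H with v ∈ e', Φ e' := by
          apply Finset.single_le_sum (fun e' _ => ?_) (Finset.mem_filter.mpr ⟨he, hv⟩)
          simp only [hΦ]
          split <;> [exact hφ0 _; exact le_rfl]
      _ = 1 := hΦvert v
  · intro v
    rw [hΦvert v]
  · have key : (r:ℝ) * ∑ e ∈ H, Φ e = Fintype.card V := by
      have h3 : ∀ e ∈ H, (r:ℝ) * Φ e = ∑ v ∈ (univ : Finset V), if v ∈ e then Φ e else 0 := by
        intro e he
        rw [Finset.sum_ite_mem, Finset.univ_inter, Finset.sum_const, hunif e he,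
          nsmul_eq_mul]
      rw [Finset.mul_sum, Finset.sum_congr rfl h3, Finset.sum_comm]
      have h4 : ∀ v : V, ∑ e ∈ H, (if v ∈ e then Φ e else 0) = 1 := by
        intro v
        rw [← Finset.sum_filter]
        exact hΦvert v
      rw [Finset.sum_congr rfl (fun v _ => h4 v), Finset.sum_const, Finset.card_univ,
        nsmul_eq_mul, mul_one]
    rw [eq_div_iff (ne_of_gt hr0), mul_comm]
    exact key
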